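/- The map φ_A that sends a Dyck path P = p_1 p_2 ⋯ p_{2n+2} of size n+1 with all peaks at odd height to the word v_1 ⋯ v_n with v_j = U if p_{2j}p_{2j+1} = NN, v_j = H if p_{2j}p_{2j+1} = EN, and v_j = D if p_{2j}p_{2j+1} = EE, is a bijection onto the set of Motzkin paths of length n. -/

import Mathlib

/-- A Dyck path of size `n`: a list of booleans (`true` = north step, `false` = east step)
from `(0,0)` to `(n,n)` staying weakly above the diagonal `y = x`. -/
def IsDyckPath (n : ℕ) (w : List Bool) : Prop :=
  w.length = 2 * n ∧ w.count true = n ∧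
    ∀ k, (w.take k).count false ≤ (w.take k).count true

/-- The `y`-coordinate of the lattice point reached after `k` steps. -/
def ycoord (w : List Bool) (k : ℕ) : ℕ := (w.take k).count true

/-- The `x`-coordinate of the lattice point reached after `k` steps. -/
def xcoord (w : List Bool) (k : ℕ) : ℕ := (w.take k).count false

/-- A peak: a north step at position `i` followed by an east step. -/
def IsPeak (w : List Bool) (i : ℕ) : Prop := w[i]? = some true ∧ w[i+1]? = some false

/-- A valley: an east step at position `i` followed by a north step. -/
def IsValley (w : List Bool) (i : ℕ) : Prop := w[i]? = some false ∧ w[i+1]? = some true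

/-- Height above the diagonal after `k` steps. -/
def pdepth (w : List Bool) (k : ℕ) : ℤ := (ycoord w k : ℤ) - (xcoord w k : ℤ)

/-- Step `i` (a north step) of `w` is matched with step `j` (an east step):
the facing east step at the same height (balanced-parentheses matching). -/
def Matches (w : List Bool) (i j : ℕ) : Prop :=
  i < j ∧ w[i]? = some true ∧ w[j]? = some false ∧
    pdepth w (j + 1) = pdepth w i ∧ ∀ k, i < k → k ≤ j → pdepth w i < pdepth w k

/-- The graph on `m` points whose edges are the upper arches and the lower arches;
its connected components are the components of the corresponding meander. -/
def meanderGraph (m : ℕ) (upper lower : ℕ → ℕ → Prop) : SimpleGraph (Fin m) where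
  Adj i j := i ≠ j ∧ (upper i.1 j.1 ∨ upper j.1 i.1 ∨ lower i.1 j.1 ∨ lower j.1 i.1)
  symm := by
    constructor
    intro i j h
    exact ⟨h.1.symm, by tauto⟩
  loopless := by
    constructor
    intro i h
    exact h.1 rfl

/-- The number of components of the meander with the matching of `P` above and the
matching of `Q` below. -/
noncomputable def trajPQ (n : ℕ) (P Q : List Bool) : ℕ :=
  Nat.card (meanderGraph (2 * n) (Matches P) (Matches Q)).ConnectedComponent

/-- The number of components of the meander with the matching of `P` above and the
rainbow matching `i ↦ 2n - 1 - i` below. -/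
noncomputable def traj (n : ℕ) (P : List Bool) : ℕ :=
  Nat.card (meanderGraph (2 * n) (Matches P)
    (fun i j => i + j + 1 = 2 * n)).ConnectedComponent

/-- No peak with even `y`-coordinate and no valley with odd `x`-coordinate. -/
def NoBadCorner (w : List Bool) : Prop :=
  (∀ i, IsPeak w i → Odd (ycoord w (i + 1))) ∧
  (∀ i, IsValley w i → Even (xcoord w (i + 1)))

/-- A bad corner: a peak with even `y`-coordinate or a valley with odd `x`-coordinate. -/
def IsBadCorner (w : List Bool) (i : ℕ) : Prop :=
  (IsPeak w i ∧ Even (ycoord w (i + 1))) ∨ (IsValley w i ∧ Odd (xcoord w (i + 1)))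

/-- Interchange the two steps of the corner at positions `i`, `i+1`. -/
def swapCorner (w : List Bool) (i : ℕ) : List Bool :=
  (w.set i (w.getD (i + 1) true)).set (i + 1) (w.getD i true)

open Classical in
/-- The involution `φ`: swap the two steps of the first bad corner, if any. -/
noncomputable def phiMap (w : List Bool) : List Bool :=
  if h : ∃ i, IsBadCorner w i then swapCorner w (Nat.find h) else w

/-- The number of unit squares between a Dyck path and the diagonal `y = x`. -/
def area (w : List Bool) : ℕ :=
  ((List.range w.length).map fun i =>
    if w.getD i true then 0 else ycoord w i - xcoord w i - 1).sum

/-- The zigzag Dyck path `(NE)^m`. -/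
def zigzag (m : ℕ) : List Bool := (List.replicate m [true, false]).flatten

/-- `N^{2a_1} E^{2b_1} ⋯ N^{2a_t} E^{2b_t}` for `ab = [(a_1,b_1),…,(a_t,b_t)]`. -/
def doubledWord (ab : List (ℕ × ℕ)) : List Bool :=
  (ab.map fun p => List.replicate (2 * p.1) true ++ List.replicate (2 * p.2) false).flatten

/-- `N^{a_1} E^{b_1} ⋯ N^{a_t} E^{b_t}` for `ab = [(a_1,b_1),…,(a_t,b_t)]`. -/
def halfWord (ab : List (ℕ × ℕ)) : List Bool :=
  (ab.map fun p => List.replicate p.1 true ++ List.replicate p.2 false).flatten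

/-- All peaks at odd height (`height` = `y - x` at the peak's lattice point). -/
def AllPeaksOdd (w : List Bool) : Prop :=
  ∀ i, IsPeak w i → Odd (ycoord w (i + 1) - xcoord w (i + 1))

/-- All peaks at even height. -/
def AllPeaksEven (w : List Bool) : Prop :=
  ∀ i, IsPeak w i → Even (ycoord w (i + 1) - xcoord w (i + 1))

/-- Steps of a Motzkin path: up, horizontal, down. -/
inductive MStep | U | H | D
deriving DecidableEq

/-- The total height change along a list of Motzkin steps. -/
def msum (l : List MStep) : ℤ :=
  (l.map fun s => match s with | MStep.U => 1 | MStep.H => 0 | MStep.D => -1).sum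

/-- A Motzkin path of length `n`. -/
def IsMotzkin (n : ℕ) (l : List MStep) : Prop :=
  l.length = n ∧ msum l = 0 ∧ ∀ k, 0 ≤ msum (l.take k)

/-- A Riordan path of length `n`: a Motzkin path with no horizontal step on the `x`-axis. -/
def IsRiordan (n : ℕ) (l : List MStep) : Prop :=
  IsMotzkin n l ∧ ∀ i, l[i]? = some MStep.H → msum (l.take i) ≠ 0

/-- The map `φ_A` from Dyck paths of size `n+1` (all peaks at odd height)
to Motzkin paths of length `n`: `v_j` is read off from steps `p_{2j} p_{2j+1}`. -/
def phiA (n : ℕ) (P : List Bool) : List MStep :=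
  (List.range n).map fun j =>
    match P.getD (2 * j + 1) true, P.getD (2 * j + 2) true with
    | true, true => MStep.U
    | false, true => MStep.H
    | _, _ => MStep.D

/-- The map `φ_B` from Dyck paths of size `n` (all peaks at even height)
to Riordan paths of length `n`: `u_j` is read off from steps `p_{2j-1} p_{2j}`. -/
def phiB (n : ℕ) (P : List Bool) : List MStep :=
  (List.range n).map fun j =>
    match P.getD (2 * j) true, P.getD (2 * j + 1) true with
    | true, true => MStep.U
    | false, true => MStep.H
    | _, _ => MStep.D
namespace PhiAProof

def mpair : MStep → List Bool
  | .U => [true, true]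
  | .H => [false, true]
  | .D => [false, false]

def pairsOf (l : List MStep) : List Bool := l.flatMap mpair

def psi (l : List MStep) : List Bool := true :: (pairsOf l ++ [false])

def bdepth (w : List Bool) : ℤ := (w.map fun b => if b then (1:ℤ) else -1).sum

@[simp] lemma bdepth_nil : bdepth [] = 0 := rfl

@[simp] lemma bdepth_cons (b : Bool) (w : List Bool) :
    bdepth (b :: w) = (if b then 1 else -1) + bdepth w := by
  simp [bdepth]

lemma bdepth_cons_true (w : List Bool) : bdepth (true :: w) = 1 + bdepth w := by simp
lemma bdepth_cons_false (w : List Bool) : bdepth (false :: w) = -1 + bdepth w := by simp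

@[simp] lemma bdepth_append (a b : List Bool) : bdepth (a ++ b) = bdepth a + bdepth b := by
  simp [bdepth]

lemma bdepth_eq (w : List Bool) : bdepth w = (w.count true : ℤ) - w.count false := by
  induction w with
  | nil => simp
  | cons b t ih => cases b <;> simp [ih, List.count_cons] <;> ring

lemma pdepth_eq (w : List Bool) (k : ℕ) : pdepth w k = bdepth (w.take k) := by
  rw [pdepth, bdepth_eq]; rfl

@[simp] lemma length_mpair (s : MStep) : (mpair s).length = 2 := by cases s <;> rfl

@[simp] lemma pairsOf_nil : pairsOf [] = [] := rfl

@[simp] lemma pairsOf_cons (s : MStep) (l : List MStep) :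
    pairsOf (s :: l) = mpair s ++ pairsOf l := rfl

@[simp] lemma length_pairsOf (l : List MStep) : (pairsOf l).length = 2 * l.length := by
  induction l with
  | nil => rfl
  | cons s t ih => simp [ih]; ring

@[simp] lemma msum_nil : msum [] = 0 := rfl

@[simp] lemma msum_cons (s : MStep) (l : List MStep) :
    msum (s :: l) = (match s with | MStep.U => 1 | MStep.H => 0 | MStep.D => -1) + msum l := by
  simp [msum]

lemma bdepth_mpair (s : MStep) :
    bdepth (mpair s) = 2 * (match s with | MStep.U => 1 | MStep.H => 0 | MStep.D => -1) := by
  cases s <;> simp [mpair]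

lemma bdepth_pairsOf (l : List MStep) : bdepth (pairsOf l) = 2 * msum l := by
  induction l with
  | nil => simp
  | cons s t ih => rw [pairsOf_cons, bdepth_append, ih, msum_cons, bdepth_mpair]; ring

lemma pairsOf_take (l : List MStep) (j : ℕ) :
    (pairsOf l).take (2 * j) = pairsOf (l.take j) := by
  induction l generalizing j with
  | nil => simp
  | cons s t ih =>
    cases j with
    | zero => simp
    | succ j =>
      rw [pairsOf_cons, List.take_append, List.take_of_length_le (by simp),
        length_mpair, show j + 1 = j.succ from rfl, List.take_succ_cons, pairsOf_cons,
        show 2 * j.succ - 2 = 2 * j from by omega, ih]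

lemma pairsOf_drop (l : List MStep) (j : ℕ) :
    (pairsOf l).drop (2 * j) = pairsOf (l.drop j) := by
  induction l generalizing j with
  | nil => simp
  | cons s t ih =>
    cases j with
    | zero => simp
    | succ j =>
      rw [pairsOf_cons, List.drop_append, List.drop_of_length_le (by simp),
        length_mpair, List.drop_succ_cons, List.nil_append,
        show 2 * (j + 1) - 2 = 2 * j from by omega, ih]

lemma bdepth_parity (w : List Bool) : Even (bdepth w + w.length) := by
  induction w with
  | nil => simp
  | cons b t ih =>
    obtain ⟨m, hm⟩ := ih
    cases b
    · exact ⟨m, by rw [bdepth_cons_false, List.length_cons]; push_cast; omega⟩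
    · exact ⟨m + 1, by rw [bdepth_cons_true, List.length_cons]; push_cast; omega⟩

end PhiAProof
namespace PhiAProof

lemma two_count (w : List Bool) : 2 * (w.count true : ℤ) = w.length + bdepth w := by
  induction w with
  | nil => simp
  | cons b t ih => cases b <;> simp [List.count_cons, ih] <;> push_cast <;> omega

lemma bdepth_take_succ (w : List Bool) (k : ℕ) :
    bdepth (w.take (k + 1)) = bdepth (w.take k) + bdepth w[k]?.toList := by
  rw [List.take_succ, bdepth_append]

lemma bdepth_opt (o : Option Bool) : -1 ≤ bdepth o.toList ∧ bdepth o.toList ≤ 1 := by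
  cases o with
  | none => simp
  | some b => cases b <;> simp

@[simp] lemma length_psi (l : List MStep) : (psi l).length = 2 * l.length + 2 := by
  simp [psi]

lemma bdepth_psi (l : List MStep) : bdepth (psi l) = 2 * msum l := by
  simp [psi, bdepth_pairsOf]

lemma count_take_le_iff (w : List Bool) (k : ℕ) :
    (w.take k).count false ≤ (w.take k).count true ↔ 0 ≤ bdepth (w.take k) := by
  rw [bdepth_eq]; omega

lemma key_lower {l : List MStep} (h : ∀ k, 0 ≤ msum (l.take k)) (hms : msum l = 0) :
    ∀ m, (-1 : ℤ) ≤ bdepth ((pairsOf l ++ [false]).take m) := by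
  intro m
  rcases le_or_gt m (2 * l.length) with hm | hm
  · rw [List.take_append_of_le_length (by simpa using hm)]
    rcases Nat.even_or_odd m with ⟨j, hj⟩ | ⟨j, hj⟩
    · subst hj
      rw [show j + j = 2 * j from by omega, pairsOf_take, bdepth_pairsOf]
      have := h j; omega
    · subst hj
      rw [show 2 * j + 1 = (2 * j) + 1 from rfl, bdepth_take_succ, pairsOf_take,
        bdepth_pairsOf]
      have := h j
      have := (bdepth_opt ((pairsOf l)[2 * j]?)).1
      omega
  · rw [List.take_of_length_le (by simp; omega)]
    simp [bdepth_pairsOf, hms]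

lemma psi_prefix {n : ℕ} {l : List MStep} (h : IsMotzkin n l) (k : ℕ) :
    0 ≤ bdepth ((psi l).take k) := by
  cases k with
  | zero => simp
  | succ m =>
    rw [psi, List.take_succ_cons, bdepth_cons_true]
    have := key_lower h.2.2 h.2.1 m
    omega

lemma isDyck_psi {n : ℕ} {l : List MStep} (h : IsMotzkin n l) : IsDyckPath (n + 1) (psi l) := by
  obtain ⟨hlen, hms, hpre⟩ := h
  refine ⟨by simp [hlen]; ring, ?_, fun k => (count_take_le_iff _ _).2 (psi_prefix ⟨hlen, hms, hpre⟩ k)⟩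
  have h2 := two_count (psi l)
  rw [bdepth_psi, hms, length_psi, hlen] at h2
  omega

lemma bdepth_take_parity (w : List Bool) (k : ℕ) (h : k ≤ w.length) :
    Even (bdepth (w.take k) + k) := by
  have := bdepth_parity (w.take k)
  rwa [List.length_take, Nat.min_eq_left h] at this

lemma odd_height_iff (w : List Bool) (k : ℕ) (h0 : 0 ≤ bdepth (w.take k)) :
    Odd (ycoord w k - xcoord w k) ↔ Odd (bdepth (w.take k)) := by
  have he : bdepth (w.take k) = (ycoord w k : ℤ) - xcoord w k := bdepth_eq _
  have hyx : xcoord w k ≤ ycoord w k := by omega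
  rw [he, ← Nat.cast_sub hyx, Int.odd_coe_nat]

lemma pairsOf_getElem {l : List MStep} {j : ℕ} {s : MStep} (h : l[j]? = some s) :
    (pairsOf l)[2 * j]? = (mpair s)[0]? ∧ (pairsOf l)[2 * j + 1]? = (mpair s)[1]? := by
  have hj : j < l.length := by
    by_contra hc
    rw [List.getElem?_eq_none (by omega)] at h
    cases h
  have hdrop : l.drop j = s :: l.drop (j + 1) := by
    rw [List.drop_eq_getElem_cons hj]
    congr 1
    have h' := List.getElem?_eq_getElem hj
    rw [h'] at h
    exact Option.some.inj h
  have h0 : (pairsOf l)[2 * j]? = (pairsOf (l.drop j))[0]? := by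
    rw [← pairsOf_drop, List.getElem?_drop]
    norm_num
  have h1 : (pairsOf l)[2 * j + 1]? = (pairsOf (l.drop j))[1]? := by
    rw [← pairsOf_drop, List.getElem?_drop]
  rw [hdrop, pairsOf_cons] at h0 h1
  constructor
  · rw [h0, List.getElem?_append]
    cases s <;> simp [mpair]
  · rw [h1, List.getElem?_append]
    cases s <;> simp [mpair]

end PhiAProof
namespace PhiAProof

lemma psi_getElem_zero (l : List MStep) : (psi l)[0]? = some true := by
  rw [psi, List.getElem?_cons_zero]

lemma psi_getElem_succ (l : List MStep) (k : ℕ) (hk : k < 2 * l.length) :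
    (psi l)[k + 1]? = (pairsOf l)[k]? := by
  rw [psi, List.getElem?_cons_succ, List.getElem?_append]
  rw [if_pos (by simpa using hk)]

lemma psi_getElem_last (l : List MStep) : (psi l)[2 * l.length + 1]? = some false := by
  rw [psi, List.getElem?_cons_succ, List.getElem?_append]
  rw [if_neg (by simp)]
  simp

lemma allPeaksOdd_psi {n : ℕ} {l : List MStep} (h : IsMotzkin n l) : AllPeaksOdd (psi l) := by
  intro i hpk
  obtain ⟨hpk1, hpk2⟩ := hpk
  have hi1 : i + 1 < (psi l).length := by
    by_contra hc
    rw [List.getElem?_eq_none (by omega)] at hpk2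
    cases hpk2
  rw [length_psi] at hi1
  rcases Nat.even_or_odd i with ⟨j, hj⟩ | ⟨j, hj⟩
  · -- even position: height is odd automatically by parity
    rw [odd_height_iff _ _ (psi_prefix h _)]
    obtain ⟨c, hc⟩ := bdepth_take_parity (psi l) (i + 1) (by rw [length_psi]; omega)
    exact ⟨c - j - 1, by omega⟩
  · -- odd position: impossible (would be an NE pair)
    exfalso
    subst hj
    have hjl : j < l.length := by omega
    have h1 : (psi l)[2 * j + 1]? = (pairsOf l)[2 * j]? :=
      psi_getElem_succ l (2 * j) (by omega)
    have h2 : (psi l)[2 * j + 1 + 1]? = (pairsOf l)[2 * j + 1]? :=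
      psi_getElem_succ l (2 * j + 1) (by omega)
    obtain ⟨g0, g1⟩ := pairsOf_getElem (List.getElem?_eq_getElem hjl)
    rw [h1, g0] at hpk1
    rw [h2, g1] at hpk2
    revert hpk1 hpk2
    cases l[j] <;> simp [mpair]

lemma phiA_psi {n : ℕ} {l : List MStep} (hlen : l.length = n) : phiA n (psi l) = l := by
  apply List.ext_getElem?
  intro j
  rcases lt_or_ge j n with hj | hj
  · have hjl : j < l.length := by omega
    rw [phiA, List.getElem?_map, List.getElem?_range hj]
    rw [List.getElem?_eq_getElem hjl]
    obtain ⟨g0, g1⟩ := pairsOf_getElem (List.getElem?_eq_getElem hjl)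
    have e1 : (psi l).getD (2 * j + 1) true = ((pairsOf l)[2 * j]?).getD true := by
      rw [List.getD_eq_getElem?_getD, psi_getElem_succ l (2 * j) (by omega)]
    have e2 : (psi l).getD (2 * j + 2) true = ((pairsOf l)[2 * j + 1]?).getD true := by
      rw [List.getD_eq_getElem?_getD, show 2 * j + 2 = (2 * j + 1) + 1 from rfl,
        psi_getElem_succ l (2 * j + 1) (by omega)]
    simp only [Option.map_some]
    rw [e1, e2, g0, g1]
    cases l[j] <;> rfl
  · rw [phiA, List.getElem?_map,
      List.getElem?_eq_none (show (List.range n).length ≤ j by simpa using hj),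
      List.getElem?_eq_none (by omega)]
    rfl

end PhiAProof
namespace PhiAProof

lemma dyck_prefix {n : ℕ} {P : List Bool} (h : IsDyckPath n P) (k : ℕ) :
    0 ≤ bdepth (P.take k) := (count_take_le_iff P k).1 (h.2.2 k)

lemma dyck_bdepth {n : ℕ} {P : List Bool} (h : IsDyckPath n P) : bdepth P = 0 := by
  have h2 := two_count P
  rw [h.1, h.2.1] at h2
  push_cast at h2
  omega

lemma dyck_first {n : ℕ} {P : List Bool} (h : IsDyckPath (n + 1) P) : P[0]? = some true := by
  have hlen : 0 < P.length := by rw [h.1]; omega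
  have hsome : P[0]? = some P[0] := List.getElem?_eq_getElem hlen
  cases hP0 : P[0] with
  | true => rw [hsome, hP0]
  | false =>
    exfalso
    have hb := dyck_prefix h 1
    rw [show (1 : ℕ) = 0 + 1 from rfl, bdepth_take_succ, hsome, hP0] at hb
    simp at hb

lemma dyck_last {n : ℕ} {P : List Bool} (h : IsDyckPath (n + 1) P) :
    P[2 * n + 1]? = some false := by
  have hlen : P.length = 2 * n + 2 := by rw [h.1]; ring
  have hidx : 2 * n + 1 < P.length := by omega
  have hsome : P[2 * n + 1]? = some P[2 * n + 1] := List.getElem?_eq_getElem hidx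
  have hb1 := dyck_prefix h (2 * n + 1)
  have hb2 : bdepth (P.take (2 * n + 2)) = 0 := by
    rw [List.take_of_length_le (by omega)]
    exact dyck_bdepth h
  rw [show 2 * n + 2 = (2 * n + 1) + 1 from rfl, bdepth_take_succ, hsome] at hb2
  cases hP : P[2 * n + 1] with
  | false => rw [hsome, hP]
  | true => exfalso; rw [hP] at hb2; simp at hb2; omega

lemma no_ne {n : ℕ} {P : List Bool} (hD : IsDyckPath (n + 1) P) (hO : AllPeaksOdd P)
    {j : ℕ} (h1 : P[2 * j + 1]? = some true) (h2 : P[2 * j + 1 + 1]? = some false) : False := by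
  have hodd := hO (2 * j + 1) ⟨h1, h2⟩
  rw [odd_height_iff _ _ (dyck_prefix hD _)] at hodd
  have hi2 : 2 * j + 1 + 1 ≤ P.length := by
    by_contra hc
    rw [List.getElem?_eq_none (by omega)] at h2
    cases h2
  have hev := bdepth_take_parity P (2 * j + 1 + 1) hi2
  obtain ⟨a, ha⟩ := hodd
  obtain ⟨b, hb⟩ := hev
  omega

lemma psi_phiA {n : ℕ} {P : List Bool} (hD : IsDyckPath (n + 1) P) (hO : AllPeaksOdd P) :
    psi (phiA n P) = P := by
  have hlenP : P.length = 2 * n + 2 := by rw [hD.1]; ring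
  have hlenl : (phiA n P).length = n := by simp [phiA]
  apply List.ext_getElem?
  intro i
  match i with
  | 0 => rw [psi_getElem_zero, dyck_first hD]
  | (m + 1) =>
    rcases lt_or_ge m (2 * n) with hm | hm
    · rw [psi_getElem_succ _ m (by omega)]
      rcases Nat.even_or_odd m with ⟨j, hj⟩ | ⟨j, hj⟩
      all_goals
        have hjn : j < n := by omega
        have hb1 : P[2 * j + 1]? = some (P.getD (2 * j + 1) true) := by
          rw [List.getD_eq_getElem?_getD,
            List.getElem?_eq_getElem (show 2 * j + 1 < P.length by omega)]
          rfl
        have hb2 : P[2 * j + 1 + 1]? = some (P.getD (2 * j + 2) true) := by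
          rw [List.getD_eq_getElem?_getD,
            List.getElem?_eq_getElem (show 2 * j + 2 < P.length by omega)]
          rfl
        have hfj : (phiA n P)[j]? = some (match P.getD (2 * j + 1) true,
            P.getD (2 * j + 2) true with
            | true, true => MStep.U | false, true => MStep.H | _, _ => MStep.D) := by
          rw [phiA, List.getElem?_map, List.getElem?_range hjn]
          rfl
        obtain ⟨g0, g1⟩ := pairsOf_getElem hfj
      · rw [show m = 2 * j from by omega, g0, hb1]
        cases h1 : P.getD (2 * j + 1) true <;> cases h2 : P.getD (2 * j + 2) true <;>
          first
            | rfl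
            | exact (no_ne hD hO (by rw [hb1, h1]) (by rw [hb2, h2])).elim
      · rw [show m = 2 * j + 1 from by omega, g1, hb2]
        cases h1 : P.getD (2 * j + 1) true <;> cases h2 : P.getD (2 * j + 2) true <;>
          first
            | rfl
            | exact (no_ne hD hO (by rw [hb1, h1]) (by rw [hb2, h2])).elim
    · rcases eq_or_lt_of_le hm with he | hl
      · have hm' : m = 2 * n := he.symm
        subst hm'
        rw [show 2 * n + 1 = 2 * (phiA n P).length + 1 from by rw [hlenl],
          psi_getElem_last, hlenl, dyck_last hD]
      · rw [List.getElem?_eq_none (by rw [length_psi, hlenl]; omega),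
          List.getElem?_eq_none (by omega)]

lemma motzkin_phiA {n : ℕ} {P : List Bool} (hD : IsDyckPath (n + 1) P) (hO : AllPeaksOdd P) :
    IsMotzkin n (phiA n P) := by
  have hpsi := psi_phiA hD hO
  have hlen : (phiA n P).length = n := by simp [phiA]
  have hms : msum (phiA n P) = 0 := by
    have hb : bdepth (psi (phiA n P)) = 0 := by rw [hpsi]; exact dyck_bdepth hD
    rw [bdepth_psi] at hb
    omega
  refine ⟨hlen, hms, ?_⟩
  intro k
  rcases le_or_gt k n with hk | hk
  · have key : bdepth ((psi (phiA n P)).take (2 * k + 1)) =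
        1 + 2 * msum ((phiA n P).take k) := by
      rw [psi, List.take_succ_cons, bdepth_cons_true,
        List.take_append_of_le_length (by rw [length_pairsOf, hlen]; omega),
        pairsOf_take, bdepth_pairsOf]
    have h0 := dyck_prefix hD (2 * k + 1)
    rw [← hpsi] at h0
    omega
  · rw [List.take_of_length_le (by omega)]
    exact hms.ge

end PhiAProof

/-- `φ_A` is a bijection from Dyck paths of size `n+1` with all peaks at odd height onto
Motzkin paths of length `n`. -/
theorem phiA_bijection (n : ℕ) :
    ∃ e : {P : List Bool // IsDyckPath (n + 1) P ∧ AllPeaksOdd P} ≃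
          {l : List MStep // IsMotzkin n l},
      ∀ P, (e P : List MStep) = phiA n P.1 := by
  exact ⟨⟨fun P => ⟨phiA n P.1, PhiAProof.motzkin_phiA P.2.1 P.2.2⟩,
    fun l => ⟨PhiAProof.psi l.1, PhiAProof.isDyck_psi l.2, PhiAProof.allPeaksOdd_psi l.2⟩,
    fun P => Subtype.ext (PhiAProof.psi_phiA P.2.1 P.2.2),
    fun l => Subtype.ext (PhiAProof.phiA_psi l.2.1)⟩, fun P => rfl⟩
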